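/- Let q be a prime power and let n, κ, t be positive integers with t < n. If there exists an [n, κ, t+1] linear code over F_q, then there exists an (n,t)_q-cooling code of size q^κ. -/

import Mathlib

/-- An `(n,t)`-cooling code of size `M` over coefficients `F`: `M` pairwise disjoint
subsets (codesets) of `F^n` such that for every `t`-subset `S` of coordinates and every
codeset, some vector in the codeset has support disjoint from `S`. -/
def IsCoolingCode (F : Type*) [Zero F] (n t M : ℕ)
    (C : Fin M → Set (Fin n → F)) : Prop :=
  (∀ i j : Fin M, i ≠ j → Disjoint (C i) (C j)) ∧
  ∀ S : Finset (Fin n), S.card = t → ∀ i : Fin M,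
    ∃ x ∈ C i, ∀ j ∈ S, x j = 0

theorem stmt_15 (q n κ t : ℕ) (hq : IsPrimePow q)
    (ht : 0 < t) (htn : t < n) (hκ : 0 < κ)
    (F : Type) [Field F] [Fintype F] [DecidableEq F] (hF : Fintype.card F = q)
    (hcode : ∃ K : Submodule F (Fin n → F),
      Module.finrank F K = κ ∧ ∀ x ∈ K, x ≠ 0 → t + 1 ≤ hammingNorm x) :
    ∃ C : Fin (q ^ κ) → Set (Fin n → F), IsCoolingCode F n t (q ^ κ) C := by
  obtain ⟨K, hK, hdist⟩ := hcode
  -- a basis of K indexed by Fin κ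
  have : Module.Finite F K := Module.Finite.of_finite
  let b : Module.Basis (Fin κ) F K := (Module.finBasis F K).reindex (finCongr hK)
  -- the linear map f : F^n → F^κ
  let f : (Fin n → F) →ₗ[F] (Fin κ → F) :=
    { toFun := fun x i => ∑ j, x j * (b i : Fin n → F) j
      map_add' := by intro x y; funext i; simp [add_mul, Finset.sum_add_distrib]
      map_smul' := by intro c x; funext i; simp [Finset.mul_sum, mul_assoc] }
  have hcard : Fintype.card (Fin κ → F) = q ^ κ := by
    simp [Fintype.card_fun, hF]
  let e : (Fin κ → F) ≃ Fin (q ^ κ) := Fintype.equivFinOfCardEq hcard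
  refine ⟨fun i => f ⁻¹' {e.symm i}, ?_, ?_⟩
  · intro i j hij
    rw [Set.disjoint_left]
    rintro x (hx : f x = e.symm i) (hy : f x = e.symm j)
    exact hij (e.symm.injective (hx ▸ hy))
  · intro S hS i
    -- the embedding of vectors supported off S
    let h : ({j : Fin n // j ∉ S} → F) →ₗ[F] (Fin n → F) :=
      { toFun := fun y j => if hj : j ∈ S then 0 else y ⟨j, hj⟩
        map_add' := by intro x y; funext j; by_cases hj : j ∈ S <;> simp [hj]
        map_smul' := by intro c x; funext j; by_cases hj : j ∈ S <;> simp [hj] }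
    have hgsurj : Function.Surjective (f.comp h) := by
      rw [← LinearMap.dualMap_injective_iff]
      rw [← LinearMap.ker_eq_bot]
      rw [Submodule.eq_bot_iff]
      intro φ hφ
      rw [LinearMap.mem_ker] at hφ
      set c : Fin κ → F := fun i => φ (Pi.single i 1) with hc
      have hφeval : ∀ v : Fin κ → F, φ v = ∑ i, v i * c i := by
        intro v
        have hv : v = ∑ i, v i • (Pi.single i 1 : Fin κ → F) := by
          funext j
          simp [Pi.single_apply]
        conv_lhs => rw [hv]
        simp [hc]
      set w : Fin n → F := ∑ i, c i • (b i : Fin n → F) with hw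
      have hwK : w ∈ K := by
        apply Submodule.sum_mem
        intro i _
        exact Submodule.smul_mem _ _ (b i).2
      have hwS : ∀ j, j ∉ S → w j = 0 := by
        intro j hj
        have := congrArg (fun ψ => ψ (Pi.single (⟨j, hj⟩ : {j : Fin n // j ∉ S}) 1)) hφ
        simp only [LinearMap.dualMap_apply, LinearMap.zero_apply, LinearMap.comp_apply] at this
        rw [hφeval] at this
        have hgy : ∀ i : Fin κ,
            f (h (Pi.single (⟨j, hj⟩ : {j : Fin n // j ∉ S}) 1)) i = (b i : Fin n → F) j := by
          intro i
          simp only [f, h, LinearMap.coe_mk, AddHom.coe_mk]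
          rw [Finset.sum_eq_single j]
          · simp [hj]
          · intro j' _ hj'
            by_cases hj'S : j' ∈ S
            · simp [hj'S]
            · have : (⟨j', hj'S⟩ : {j : Fin n // j ∉ S}) ≠ ⟨j, hj⟩ := by
                simp [Subtype.ext_iff, hj']
              simp [hj'S, Pi.single_eq_of_ne this]
          · simp
        simp only [hgy] at this
        have : ∑ i, (b i : Fin n → F) j * c i = 0 := this
        rw [hw]
        simpa [Finset.sum_apply, mul_comm] using this
      have hwnorm : hammingNorm w ≤ t := by
        calc hammingNorm w ≤ S.card := by
              apply Finset.card_le_card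
              intro j hj
              simp only [hammingNorm, Finset.mem_filter, Finset.mem_univ, true_and] at hj
              by_contra hjS
              exact hj (hwS j hjS)
           _ = t := hS
      have hw0 : w = 0 := by
        by_contra hw0
        have := hdist w hwK hw0
        omega
      have hc0 : c = 0 := by
        have hsum : (∑ i, c i • b i) = 0 := by
          apply Subtype.ext
          push_cast
          rw [← hw0, hw]
        have := Fintype.linearIndependent_iff.mp b.linearIndependent c hsum
        funext i; exact this i
      refine LinearMap.ext fun v => ?_
      rw [hφeval, hc0]
      simp
    obtain ⟨y, hy⟩ := hgsurj (e.symm i)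
    refine ⟨h y, hy, ?_⟩
    intro j hj
    show (if hj' : j ∈ S then 0 else y ⟨j, hj'⟩) = 0
    simp [hj]
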